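/- arXiv:1609.04100 — 2 statements merged into one kernel-verified Lean document; each statement's English description precedes it below -/
import Mathlib

section
/- The rule R□ of G3K is sound: if the labeled sequent xRy, Γ ⊢ Δ, y:A is valid, where the label y does not occur in Γ, Δ, x or A, then the sequent Γ ⊢ Δ, x:□A is valid. -/
/-- Propositional modal formulas. -/
inductive MF (P : Type) : Type
  | atom : P → MF P
  | neg  : MF P → MF P
  | and  : MF P → MF P → MF P
  | or   : MF P → MF P → MF P
  | box  : MF P → MF P
  | dia  : MF P → MF P

/-- A Kripke model over propositional symbols `P` with (nonempty) set of worlds `W`. -/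
structure Kripke (P : Type) (W : Type) where
  nonempty : Nonempty W
  R : W → W → Prop
  V : W → P → Prop

/-- Truth of a modal formula at a world of a Kripke model. -/
def sat {P W : Type} (M : Kripke P W) : W → MF P → Prop
  | w, .atom p  => M.V w p
  | w, .neg A   => ¬ sat M w A
  | w, .and A B => sat M w A ∧ sat M w B
  | w, .or A B  => sat M w A ∨ sat M w B
  | w, .box A   => ∀ w', M.R w w' → sat M w' A
  | w, .dia A   => ∃ w', M.R w w' ∧ sat M w' A

/-- G3K formulas: labeled formulas `x:A` and relational atoms `x R y`. -/
inductive LabF (L P : Type) : Type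
  | lab : L → MF P → LabF L P
  | rel : L → L → LabF L P

/-- Satisfaction of a G3K formula in a Kripke model under an interpretation of labels. -/
def lsat {L P W : Type} (M : Kripke P W) (rho : L → W) : LabF L P → Prop
  | .lab x A => sat M (rho x) A
  | .rel x y => M.R (rho x) (rho y)

/-- A labeled sequent `Γ ⊢ Δ` is valid when, under every Kripke model and every
interpretation of labels into worlds, if all formulas of `Γ` are satisfied then some
formula of `Δ` is satisfied. -/
def seqValid {L P : Type} (Gamma Delta : List (LabF L P)) : Prop :=
  ∀ (W : Type) (M : Kripke P W) (rho : L → W),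
    (∀ phi ∈ Gamma, lsat M rho phi) → ∃ psi ∈ Delta, lsat M rho psi

/-- The label `y` does not occur in a G3K formula. -/
def freshFor {L P : Type} (y : L) : LabF L P → Prop
  | .lab z _ => y ≠ z
  | .rel z u => y ≠ z ∧ y ≠ u

/-- Soundness of the rule `R□` of G3K: if `xRy, Γ ⊢ Δ, y:A` is valid and the label `y`
does not occur in `Γ`, `Δ` or `x`, then `Γ ⊢ Δ, x:□A` is valid. -/
theorem Rbox_sound {L P : Type} (x y : L) (A : MF P) (Gamma Delta : List (LabF L P))
    (hyx : y ≠ x)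
    (hG : ∀ phi ∈ Gamma, freshFor y phi)
    (hD : ∀ psi ∈ Delta, freshFor y psi)
    (h : seqValid (LabF.rel x y :: Gamma) (Delta ++ [LabF.lab y A])) :
    seqValid Gamma (Delta ++ [LabF.lab x (.box A)]) := by
  intro W M rho hGam
  by_cases hDel : ∃ psi ∈ Delta, lsat M rho psi
  · obtain ⟨psi, hmem, hs⟩ := hDel
    exact ⟨psi, List.mem_append_left _ hmem, hs⟩
  · refine ⟨LabF.lab x (.box A), List.mem_append_right _ (List.mem_singleton.mpr rfl), ?_⟩
    intro w' hR
    classical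
    set rho' : L → W := fun z => if z = y then w' else rho z with hrho'
    have hagree : ∀ z : L, y ≠ z → rho' z = rho z := by
      intro z hz; simp [hrho', Ne.symm hz]
    have hfresh : ∀ phi : LabF L P, freshFor y phi → (lsat M rho' phi ↔ lsat M rho phi) := by
      intro phi hf
      cases phi with
      | lab z B => simp [lsat, hagree z hf]
      | rel z u => simp [lsat, hagree z hf.1, hagree u hf.2]
    have hy' : rho' y = w' := by simp [hrho']
    have hx' : rho' x = rho x := hagree x hyx
    have := h W M rho' ?_
    · obtain ⟨psi, hmem, hs⟩ := this
      rcases List.mem_append.mp hmem with hm | hm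
      · exact absurd ⟨psi, hm, (hfresh psi (hD psi hm)).mp hs⟩ hDel
      · rw [List.mem_singleton.mp hm] at hs
        simpa [lsat, hy'] using hs
    · intro phi hmem
      rcases List.mem_cons.mp hmem with rfl | hm
      · simpa [lsat, hy', hx'] using hR
      · exact (hfresh phi (hG phi hm)).mpr (hGam phi hm)
end

section
/- The rule L◇ of G3K is sound: if the sequent xRy, y:A, Γ ⊢ Δ is valid, where the label y does not occur in Γ, Δ, x or A, then the sequent x:◇A, Γ ⊢ Δ is valid. -/
/-- Soundness of the rule `L◇` of G3K: if `xRy, y:A, Γ ⊢ Δ` is valid and the label `y`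
does not occur in `Γ`, `Δ` or `x`, then `x:◇A, Γ ⊢ Δ` is valid. -/
theorem Ldia_sound {L P : Type} (x y : L) (A : MF P) (Gamma Delta : List (LabF L P))
    (hyx : y ≠ x)
    (hG : ∀ phi ∈ Gamma, freshFor y phi)
    (hD : ∀ psi ∈ Delta, freshFor y psi)
    (h : seqValid (LabF.rel x y :: LabF.lab y A :: Gamma) Delta) :
    seqValid (LabF.lab x (.dia A) :: Gamma) Delta := by
  classical
  intro W M rho hprem
  have hx : lsat M rho (LabF.lab x (.dia A)) := hprem _ List.mem_cons_self
  obtain ⟨w', hR, hA⟩ := hx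
  set rho' : L → W := fun z => if z = y then w' else rho z with hrho'
  have hfresh : ∀ phi : LabF L P, freshFor y phi → (lsat M rho' phi ↔ lsat M rho phi) := by
    intro phi hf
    cases phi with
    | lab z B => simp only [lsat, hrho']; rw [if_neg (fun hzy => hf hzy.symm)]
    | rel z u =>
        simp only [lsat, hrho']
        rw [if_neg (fun hzy => hf.1 hzy.symm), if_neg (fun huy => hf.2 huy.symm)]
  have hy' : rho' y = w' := by simp [hrho']
  have hx' : rho' x = rho x := by
    simp only [hrho']; rw [if_neg (fun h => hyx h.symm)]
  have := h W M rho' ?_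
  · obtain ⟨psi, hpsi, hsat⟩ := this
    exact ⟨psi, hpsi, (hfresh psi (hD psi hpsi)).mp hsat⟩
  · intro phi hphi
    simp only [List.mem_cons] at hphi
    rcases hphi with h1 | h1 | h1
    any_goals subst h1
    · show lsat M rho' (LabF.rel x y)
      show M.R (rho' x) (rho' y)
      rw [hx', hy']; exact hR
    · show lsat M rho' (LabF.lab y A)
      simpa [lsat, hy'] using hA
    · exact (hfresh phi (hG phi h1)).mpr (hprem phi (List.mem_cons_of_mem _ h1))
end
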